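/- Let A_1 be the n×n matrix over F_2 with rows and columns indexed by {0,…,n−1} and entries A_1(i,j) = 1 if and only if j = 0 or j = i, and let A_m = A_1^{⊗m} be its m-fold Kronecker power, whose rows and columns are indexed by {0,…,n−1}^m and whose entry in row i and column j equals 1 if and only if j ⪯ i. Then for any m ≥ 1 and 0 ≤ r ≤ m: (1) the rows of A_m indexed by {i : wt(i) ≥ r+1} (equivalently, the rows of A_m of Hamming weight at least 2^{r+1}) form an F_2-basis of D_n(r,m); (2) the columns of A_m indexed by {j : wt(j) ≤ r} (equivalently, the columns of A_m of Hamming weight at least n^{m−r}) form an F_2-basis of C_n(r,m). -/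

import Mathlib

open Finset

/-- The `l`-th subvector in the concatenation decomposition:
`(subvec v l) i' = v (i'|l)`. -/
def subvec {n m : ℕ} (v : (Fin (m + 1) → Fin n) → ZMod 2) (l : Fin n) :
    (Fin m → Fin n) → ZMod 2 :=
  fun i' => v (Fin.snoc i' l)

/-- The Berman code `D_n(r,m)`, defined recursively. -/
def BermanD (n : ℕ) : (m : ℕ) → ℕ → Set ((Fin m → Fin n) → ZMod 2)
  | 0, _ => {0}
  | m + 1, r =>
    if r = 0 then {v | ∑ i, v i = 0}
    else if m + 1 ≤ r then {0}
    else {v | (∀ l : Fin n, subvec v l ∈ BermanD n m (r - 1)) ∧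
              (fun i' => ∑ l : Fin n, subvec v l i') ∈ BermanD n m r}

/-- The dual Berman code `C_n(r,m)`, defined recursively. -/
def BermanC (n : ℕ) : (m : ℕ) → ℕ → Set ((Fin m → Fin n) → ZMod 2)
  | 0, _ => Set.univ
  | m + 1, r =>
    if r = 0 then {v | ∃ c : ZMod 2, ∀ i, v i = c}
    else if m + 1 ≤ r then Set.univ
    else {v | ∃ (u : (Fin m → Fin n) → ZMod 2) (w : Fin n → (Fin m → Fin n) → ZMod 2),
            u ∈ BermanC n m r ∧
            (∀ l : Fin n, (l : ℕ) < n - 1 → w l ∈ BermanC n m (r - 1)) ∧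
            (∀ l : Fin n, (l : ℕ) = n - 1 → w l = 0) ∧
            (∀ l : Fin n, subvec v l = u + w l)}

/-- Hamming weight of a binary vector. -/
def hwt {n m : ℕ} (v : (Fin m → Fin n) → ZMod 2) : ℕ :=
  (Finset.univ.filter fun i => v i ≠ 0).card

/-- `preceq j i` means `j ⪯ i`: for every position `k`, either `j k = 0` or `j k = i k`. -/
def preceq {n m : ℕ} (j i : Fin m → Fin n) : Prop :=
  ∀ k, (j k : ℕ) = 0 ∨ j k = i k

instance {n m : ℕ} (j i : Fin m → Fin n) : Decidable (preceq j i) :=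
  inferInstanceAs (Decidable (∀ k, (j k : ℕ) = 0 ∨ j k = i k))

/-- Hamming weight of an index tuple. -/
def wtTuple {n m : ℕ} (i : Fin m → Fin n) : ℕ :=
  (Finset.univ.filter fun k => (i k : ℕ) ≠ 0).card

/-- The vector `c_m(i')`: the indicator of `{i : i ⪯ i'}`. -/
def cVec {n : ℕ} (m : ℕ) (i' : Fin m → Fin n) : (Fin m → Fin n) → ZMod 2 :=
  fun i => if preceq i i' then 1 else 0

/-- The vector `d_m(i')`: the indicator of `{i : i' ⪯ i}`. -/
def dVec {n : ℕ} (m : ℕ) (i' : Fin m → Fin n) : (Fin m → Fin n) → ZMod 2 :=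
  fun i => if preceq i' i then 1 else 0

/-- The matrix `A_m = A_1^{⊗m}`: its entry in row `i` and column `j` is `1` iff `j ⪯ i`. -/
def Amat (n m : ℕ) : Matrix (Fin m → Fin n) (Fin m → Fin n) (ZMod 2) :=
  fun i j => if preceq j i then 1 else 0

section Helpers

variable {n : ℕ}

lemma fin_val_zero [NeZero n] (a : Fin n) : (a : ℕ) = 0 ↔ a = 0 := by rw [Fin.ext_iff, Fin.val_zero]

lemma boole_and (P Q : Prop) [Decidable P] [Decidable Q] :
    (if P ∧ Q then (1 : ZMod 2) else 0) = (if P then 1 else 0) * (if Q then 1 else 0) := by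
  split_ifs with h h1 h2 <;> simp_all

lemma sum_boole_coord [NeZero n] (a b : Fin n) :
    ∑ x : Fin n, (if ((x : ℕ) = 0 ∨ x = a) then (1 : ZMod 2) else 0) *
      (if ((b : ℕ) = 0 ∨ b = x) then (1 : ZMod 2) else 0) = if a = b then 1 else 0 := by
  simp only [fin_val_zero]
  rw [← Finset.sum_subset (Finset.subset_univ ({0, a} : Finset (Fin n)))
    (fun x _ hx => by
      simp only [Finset.mem_insert, Finset.mem_singleton, not_or] at hx
      rw [if_neg (by simpa [not_or] using hx), zero_mul])]
  by_cases ha : a = 0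
  · subst ha
    rw [Finset.insert_eq_self.2 (Finset.mem_singleton_self 0), Finset.sum_singleton]
    by_cases hb : b = 0 <;> simp [hb, eq_comm]
  · rw [Finset.sum_pair (fun h => ha h.symm)]
    rw [if_pos (show ((0:Fin n) = 0 ∨ (0:Fin n) = a) from Or.inl rfl),
      if_pos (show (a = 0 ∨ a = a) from Or.inr rfl), one_mul, one_mul]
    by_cases hb : b = 0
    · subst hb
      rw [if_pos (show ((0:Fin n) = 0 ∨ (0:Fin n) = 0) from Or.inl rfl),
        if_pos (show ((0:Fin n) = 0 ∨ (0:Fin n) = a) from Or.inl rfl),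
        if_neg ha]
      decide
    · rw [if_neg (fun h => hb (h.elim id id))]
      by_cases hba : b = a
      · subst hba; simp [hb]
      · rw [if_neg (fun h => h.elim hb hba), if_neg (fun h => hba h.symm)]
        simp

end Helpers
section Involution

variable {n : ℕ}

lemma Amat_mul_self [NeZero n] (m : ℕ) : Amat n m * Amat n m = 1 := by
  ext i j
  rw [Matrix.mul_apply]
  have h1 : ∀ t : Fin m → Fin n, Amat n m i t * Amat n m t j =
      ∏ k, ((if ((t k : ℕ) = 0 ∨ t k = i k) then (1 : ZMod 2) else 0) *
        (if ((j k : ℕ) = 0 ∨ j k = t k) then (1 : ZMod 2) else 0)) := by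
    intro t
    simp only [Amat, preceq]
    rw [Finset.prod_mul_distrib, Finset.prod_boole, Finset.prod_boole]
    simp
  simp only [h1]
  have key := Finset.prod_univ_sum (fun _ : Fin m => (Finset.univ : Finset (Fin n)))
    (fun k y => (if ((y : ℕ) = 0 ∨ y = i k) then (1 : ZMod 2) else 0) *
      (if ((j k : ℕ) = 0 ∨ j k = y) then (1 : ZMod 2) else 0))
  rw [Fintype.piFinset_univ] at key
  rw [← key]
  simp only [sum_boole_coord]
  rw [Finset.prod_boole, Matrix.one_apply]
  congr 1
  simp [funext_iff, eq_comm]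

end Involution
section Checks

variable {n : ℕ}

/-- `chkD n m v i = ∑_{j ⪰ i} v j`. -/
def chkD (n m : ℕ) (v : (Fin m → Fin n) → ZMod 2) (i : Fin m → Fin n) : ZMod 2 :=
  ∑ j, v j * Amat n m j i

/-- `chkC n m v i = ∑_{j ⪯ i} v j`. -/
def chkC (n m : ℕ) (v : (Fin m → Fin n) → ZMod 2) (i : Fin m → Fin n) : ZMod 2 :=
  ∑ j, Amat n m i j * v j

lemma chkD_eq_vecMul (m : ℕ) (v : (Fin m → Fin n) → ZMod 2) :
    chkD n m v = Matrix.vecMul v (Amat n m) := by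
  funext i; rfl

lemma chkC_eq_mulVec (m : ℕ) (v : (Fin m → Fin n) → ZMod 2) :
    chkC n m v = Matrix.mulVec (Amat n m) v := by
  funext i; rfl

lemma chkD_chkD [NeZero n] (m : ℕ) (v : (Fin m → Fin n) → ZMod 2) :
    chkD n m (chkD n m v) = v := by
  rw [chkD_eq_vecMul, chkD_eq_vecMul, Matrix.vecMul_vecMul, Amat_mul_self, Matrix.vecMul_one]

lemma chkC_chkC [NeZero n] (m : ℕ) (v : (Fin m → Fin n) → ZMod 2) :
    chkC n m (chkC n m v) = v := by
  rw [chkC_eq_mulVec, chkC_eq_mulVec, Matrix.mulVec_mulVec, Amat_mul_self, Matrix.one_mulVec]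

lemma chkD_add (m : ℕ) (u w : (Fin m → Fin n) → ZMod 2) (i : Fin m → Fin n) :
    chkD n m (u + w) i = chkD n m u i + chkD n m w i := by
  simp [chkD, add_mul, Finset.sum_add_distrib]

lemma chkC_add (m : ℕ) (u w : (Fin m → Fin n) → ZMod 2) (i : Fin m → Fin n) :
    chkC n m (u + w) i = chkC n m u i + chkC n m w i := by
  simp [chkC, mul_add, Finset.sum_add_distrib]

lemma chkC_zero (m : ℕ) (i : Fin m → Fin n) : chkC n m 0 i = 0 := by simp [chkC]

lemma chkD_sum (m : ℕ) (g : Fin n → (Fin m → Fin n) → ZMod 2) (i : Fin m → Fin n) :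
    chkD n m (fun x => ∑ l, g l x) i = ∑ l, chkD n m (g l) i := by
  simp only [chkD, Finset.sum_mul]
  rw [Finset.sum_comm]

end Checks
section Snoc

variable {n : ℕ}

lemma sum_snoc {m : ℕ} {M : Type*} [AddCommMonoid M] (f : (Fin (m+1) → Fin n) → M) :
    ∑ j, f j = ∑ b : Fin n, ∑ j' : Fin m → Fin n, f (Fin.snoc j' b) := by
  have hb := Fintype.sum_bijective
    (fun p : Fin n × (Fin m → Fin n) => (Fin.snoc p.2 p.1 : Fin (m+1) → Fin n))
    (Function.bijective_iff_has_inverse.2 ⟨fun j => (j (Fin.last m), Fin.init j),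
      fun p => by simp [Fin.init_snoc, Fin.snoc_last],
      fun j => by simp [Fin.snoc_init_self]⟩)
    (fun p => f (Fin.snoc p.2 p.1)) f (fun p => rfl)
  rw [← hb, Fintype.sum_prod_type]

lemma preceq_snoc {m : ℕ} (j' i' : Fin m → Fin n) (b a : Fin n) :
    preceq (Fin.snoc j' b : Fin (m+1) → Fin n) (Fin.snoc i' a) ↔
      (preceq j' i' ∧ ((b : ℕ) = 0 ∨ b = a)) := by
  constructor
  · intro h
    refine ⟨fun k => ?_, ?_⟩
    · simpa [Fin.snoc_castSucc] using h k.castSucc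
    · simpa [Fin.snoc_last] using h (Fin.last m)
  · rintro ⟨h1, h2⟩ k
    refine Fin.lastCases ?_ ?_ k
    · simpa [Fin.snoc_last] using h2
    · intro k'; simpa [Fin.snoc_castSucc] using h1 k'

lemma wtTuple_snoc {m : ℕ} (i' : Fin m → Fin n) (a : Fin n) :
    wtTuple (Fin.snoc i' a : Fin (m+1) → Fin n) =
      wtTuple i' + if (a : ℕ) = 0 then 0 else 1 := by
  unfold wtTuple
  rw [Finset.card_filter, Finset.card_filter, Fin.sum_univ_castSucc]
  simp only [Fin.snoc_castSucc, Fin.snoc_last]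
  congr 1
  by_cases h : (a : ℕ) = 0 <;> simp [h]

lemma wtTuple_le {m : ℕ} (i : Fin m → Fin n) : wtTuple i ≤ m := by
  classical
  calc wtTuple i ≤ (Finset.univ : Finset (Fin m)).card := Finset.card_filter_le _ _
  _ = m := by simp

lemma wtTuple_zero_iff [NeZero n] {m : ℕ} (i : Fin m → Fin n) :
    wtTuple i = 0 ↔ i = fun _ => 0 := by
  unfold wtTuple
  rw [Finset.card_eq_zero, Finset.filter_eq_empty_iff]
  simp [funext_iff, fin_val_zero]

end Snoc
section SnocChk

variable {n : ℕ}

lemma sum_gateD [NeZero n] (a : Fin n) (c : Fin n → ZMod 2) :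
    ∑ b, (if ((a : ℕ) = 0 ∨ a = b) then c b else 0) =
      if (a : ℕ) = 0 then ∑ b, c b else c a := by
  by_cases ha : (a : ℕ) = 0
  · simp [ha]
  · rw [if_neg ha]
    rw [Finset.sum_congr rfl (fun b _ => show (if ((a : ℕ) = 0 ∨ a = b) then c b else 0) =
      (if a = b then c b else 0) by simp [ha])]
    simp

lemma sum_gateC [NeZero n] (a : Fin n) (c : Fin n → ZMod 2) (ha : a ≠ 0) :
    ∑ b : Fin n, (if ((b : ℕ) = 0 ∨ b = a) then c b else 0) = c 0 + c a := by
  rw [← Finset.sum_subset (Finset.subset_univ ({0, a} : Finset (Fin n)))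
    (fun b _ hb => by
      simp only [Finset.mem_insert, Finset.mem_singleton, not_or] at hb
      rw [if_neg]
      rw [fin_val_zero]
      exact fun h => h.elim hb.1 hb.2)]
  rw [Finset.sum_pair (fun h => ha h.symm)]
  rw [if_pos (Or.inl ((fin_val_zero (0 : Fin n)).2 rfl)), if_pos (Or.inr rfl)]

lemma sum_gateC0 [NeZero n] (c : Fin n → ZMod 2) :
    ∑ b : Fin n, (if ((b : ℕ) = 0 ∨ b = 0) then c b else 0) = c 0 := by
  rw [Finset.sum_congr rfl (fun (b : Fin n) _ => show (if ((b : ℕ) = 0 ∨ b = 0) then c b else 0) =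
      (if b = 0 then c b else 0) by simp [fin_val_zero])]
  simp

lemma chkD_snoc [NeZero n] {m : ℕ} (v : (Fin (m+1) → Fin n) → ZMod 2)
    (i' : Fin m → Fin n) (a : Fin n) :
    chkD n (m+1) v (Fin.snoc i' a) =
      if (a : ℕ) = 0 then ∑ l, chkD n m (subvec v l) i' else chkD n m (subvec v a) i' := by
  rw [chkD, sum_snoc (fun j => v j * Amat n (m+1) j (Fin.snoc i' a))]
  have h1 : ∀ b (j' : Fin m → Fin n),
      v (Fin.snoc j' b) * Amat n (m+1) (Fin.snoc j' b) (Fin.snoc i' a) =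
      (if ((a : ℕ) = 0 ∨ a = b) then subvec v b j' * Amat n m j' i' else 0) := by
    intro b j'
    rw [show Amat n (m+1) (Fin.snoc j' b) (Fin.snoc i' a) =
      if (preceq i' j' ∧ ((a : ℕ) = 0 ∨ a = b)) then 1 else 0 by
        simp only [Amat]
        congr 1
        · exact propext (preceq_snoc i' j' a b)]
    by_cases h2 : ((a : ℕ) = 0 ∨ a = b)
    · rw [if_pos h2]
      simp only [Amat, subvec, and_iff_left h2]
    · rw [if_neg h2, if_neg (fun hc => h2 hc.2), mul_zero]
  simp only [h1]
  have h2 : ∀ b : Fin n, ∑ j' : Fin m → Fin n,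
      (if ((a : ℕ) = 0 ∨ a = b) then subvec v b j' * Amat n m j' i' else 0) =
      (if ((a : ℕ) = 0 ∨ a = b) then chkD n m (subvec v b) i' else 0) := by
    intro b
    split_ifs <;> simp [chkD]
  rw [Finset.sum_congr rfl (fun b _ => h2 b), sum_gateD]

lemma chkC_snoc [NeZero n] {m : ℕ} (v : (Fin (m+1) → Fin n) → ZMod 2)
    (i' : Fin m → Fin n) (a : Fin n) :
    chkC n (m+1) v (Fin.snoc i' a) =
      if (a : ℕ) = 0 then chkC n m (subvec v 0) i'
      else chkC n m (subvec v 0) i' + chkC n m (subvec v a) i' := by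
  rw [chkC, sum_snoc (fun j => Amat n (m+1) (Fin.snoc i' a) j * v j)]
  have h1 : ∀ b (j' : Fin m → Fin n),
      Amat n (m+1) (Fin.snoc i' a) (Fin.snoc j' b) * v (Fin.snoc j' b) =
      (if ((b : ℕ) = 0 ∨ b = a) then Amat n m i' j' * subvec v b j' else 0) := by
    intro b j'
    rw [show Amat n (m+1) (Fin.snoc i' a) (Fin.snoc j' b) =
      if (preceq j' i' ∧ ((b : ℕ) = 0 ∨ b = a)) then 1 else 0 by
        simp only [Amat]
        congr 1
        · exact propext (preceq_snoc j' i' b a)]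
    by_cases h2 : ((b : ℕ) = 0 ∨ b = a)
    · rw [if_pos h2]
      simp only [Amat, subvec, and_iff_left h2]
    · rw [if_neg h2, if_neg (fun hc => h2 hc.2), zero_mul]
  simp only [h1]
  have h2 : ∀ b : Fin n, ∑ j' : Fin m → Fin n,
      (if ((b : ℕ) = 0 ∨ b = a) then Amat n m i' j' * subvec v b j' else 0) =
      (if ((b : ℕ) = 0 ∨ b = a) then chkC n m (subvec v b) i' else 0) := by
    intro b
    split_ifs <;> simp [chkC]
  rw [Finset.sum_congr rfl (fun b _ => h2 b)]
  by_cases ha : (a : ℕ) = 0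
  · rw [if_pos ha]
    have ha0 : a = 0 := (fin_val_zero a).1 ha
    subst ha0
    exact sum_gateC0 _
  · rw [if_neg ha]
    exact sum_gateC a _ (fun h => ha ((fin_val_zero a).2 h ▸ rfl))

end SnocChk
section MemD

variable {n : ℕ}

lemma bermanD_zero (r : ℕ) : BermanD n 0 r = {0} := rfl

lemma bermanD_succ (m r : ℕ) : BermanD n (m+1) r =
    if r = 0 then {v | ∑ i, v i = 0}
    else if m + 1 ≤ r then {0}
    else {v | (∀ l : Fin n, subvec v l ∈ BermanD n m (r - 1)) ∧
              (fun i' => ∑ l : Fin n, subvec v l i') ∈ BermanD n m r} := by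
  rfl

lemma chkD_zero_index [NeZero n] (m : ℕ) (v : (Fin m → Fin n) → ZMod 2) :
    chkD n m v (fun _ => 0) = ∑ j, v j := by
  rw [chkD]
  refine Finset.sum_congr rfl fun j _ => ?_
  rw [show Amat n m j (fun _ => 0) = 1 from if_pos (fun k => Or.inl ((fin_val_zero _).2 rfl)), mul_one]

lemma chkD_zero [NeZero n] (m : ℕ) (i : Fin m → Fin n) : chkD n m 0 i = 0 := by simp [chkD]

lemma memD_iff (hn : 2 ≤ n) : ∀ m r (v : (Fin m → Fin n) → ZMod 2),
    v ∈ BermanD n m r ↔ ∀ i, wtTuple i ≤ r → chkD n m v i = 0 := by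
  haveI : NeZero n := ⟨by omega⟩
  intro m
  induction m with
  | zero =>
    intro r v
    rw [bermanD_zero]
    constructor
    · intro hv i _
      simp only [Set.mem_singleton_iff] at hv
      simp [hv, chkD_zero]
    · intro h
      simp only [Set.mem_singleton_iff]
      funext i
      have h0 := h i (by simp [wtTuple])
      rw [chkD, Finset.sum_eq_single_of_mem i (Finset.mem_univ i)
        (fun j _ hj => absurd (funext fun k => k.elim0) hj)] at h0
      simpa [Amat, preceq] using h0
  | succ m ih =>
    intro r v
    rcases Nat.eq_zero_or_pos r with hr0 | hrpos
    · subst hr0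
      rw [bermanD_succ, if_pos rfl]
      constructor
      · intro hv i hi
        have hi0 : i = fun _ => 0 := (wtTuple_zero_iff i).1 (Nat.le_zero.1 hi)
        subst hi0
        rw [chkD_zero_index]
        exact hv
      · intro h
        have := h (fun _ => 0) (by rw [Nat.le_zero, wtTuple_zero_iff])
        rwa [chkD_zero_index] at this
    · rcases le_or_gt r (m) with hrm | hrm
      · -- 1 ≤ r ≤ m : recursive case
        obtain ⟨s, rfl⟩ : ∃ s, r = s + 1 := ⟨r - 1, by omega⟩
        rw [bermanD_succ, if_neg (by omega), if_neg (by omega)]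
        simp only [Nat.add_sub_cancel]
        constructor
        · rintro ⟨hsub, hsum⟩ i hi
          obtain ⟨i', a, rfl⟩ : ∃ i' a, i = Fin.snoc i' a :=
            ⟨Fin.init i, i (Fin.last m), (Fin.snoc_init_self i).symm⟩
          rw [wtTuple_snoc] at hi
          rw [chkD_snoc]
          by_cases ha : (a : ℕ) = 0
          · rw [if_pos ha, ← chkD_sum]
            exact (ih (s+1) _).1 hsum i' (by rw [if_pos ha] at hi; omega)
          · rw [if_neg ha]
            exact (ih s _).1 (hsub a) i' (by rw [if_neg ha] at hi; omega)
        · intro h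
          have hsum : ∀ i', wtTuple i' ≤ s+1 →
              chkD n m (fun x => ∑ l, subvec v l x) i' = 0 := by
            intro i' hi'
            have h0 := h (Fin.snoc i' 0)
              (by rw [wtTuple_snoc, if_pos ((fin_val_zero _).2 rfl)]; omega)
            rw [chkD_snoc, if_pos ((fin_val_zero _).2 rfl)] at h0
            rw [chkD_sum]
            exact h0
          have hsubne : ∀ b : Fin n, (b : ℕ) ≠ 0 → ∀ i', wtTuple i' ≤ s →
              chkD n m (subvec v b) i' = 0 := by
            intro b hb i' hi'
            have h0 := h (Fin.snoc i' b) (by rw [wtTuple_snoc, if_neg hb]; omega)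
            rwa [chkD_snoc, if_neg hb] at h0
          refine ⟨?_, (ih (s+1) _).2 hsum⟩
          intro l
          apply (ih s _).2
          intro i' hi'
          by_cases hl : (l : ℕ) = 0
          · have hl0 : l = 0 := (fin_val_zero l).1 hl
            subst hl0
            have hS : ∑ b : Fin n, chkD n m (subvec v b) i' = 0 := by
              rw [← chkD_sum]; exact hsum i' (le_trans hi' (Nat.le_succ s))
            have hz : ∑ b ∈ Finset.univ.erase (0 : Fin n),
                chkD n m (subvec v b) i' = 0 :=
              Finset.sum_eq_zero (fun b hb =>
                hsubne b (fun hb0 => (Finset.mem_erase.1 hb).1 ((fin_val_zero b).1 hb0)) i' hi')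
            have hsplit := Finset.add_sum_erase Finset.univ
              (fun b => chkD n m (subvec v b) i') (Finset.mem_univ (0 : Fin n))
            rw [hz, add_zero] at hsplit
            simpa using hsplit.trans hS
          · exact hsubne l hl i' hi'
      · -- m + 1 ≤ r
        rw [bermanD_succ, if_neg (by omega), if_pos (by omega)]
        constructor
        · intro hv i hi
          simp only [Set.mem_singleton_iff] at hv
          simp [hv, chkD_zero]
        · intro h
          have hall : chkD n (m+1) v = 0 :=
            funext fun i => h i (le_trans (wtTuple_le i) (by omega))
          have hvv := chkD_chkD (n := n) (m+1) v
          rw [hall] at hvv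
          have : v = 0 := by rw [← hvv]; funext i; exact chkD_zero (m+1) i
          simp [this]

end MemD
section MemC

variable {n : ℕ}

lemma bermanC_zero (r : ℕ) : BermanC n 0 r = Set.univ := rfl

lemma bermanC_succ (m r : ℕ) : BermanC n (m+1) r =
    if r = 0 then {v | ∃ c : ZMod 2, ∀ i, v i = c}
    else if m + 1 ≤ r then Set.univ
    else {v | ∃ (u : (Fin m → Fin n) → ZMod 2) (w : Fin n → (Fin m → Fin n) → ZMod 2),
            u ∈ BermanC n m r ∧
            (∀ l : Fin n, (l : ℕ) < n - 1 → w l ∈ BermanC n m (r - 1)) ∧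
            (∀ l : Fin n, (l : ℕ) = n - 1 → w l = 0) ∧
            (∀ l : Fin n, subvec v l = u + w l)} := rfl

lemma memC_iff (hn : 2 ≤ n) : ∀ m r (v : (Fin m → Fin n) → ZMod 2),
    v ∈ BermanC n m r ↔ ∀ i, r + 1 ≤ wtTuple i → chkC n m v i = 0 := by
  haveI : NeZero n := ⟨by omega⟩
  intro m
  induction m with
  | zero =>
    intro r v
    rw [bermanC_zero]
    simp only [Set.mem_univ, true_iff]
    intro i hi
    exact absurd hi (by have := wtTuple_le i; omega)
  | succ m ih =>
    intro r v
    rcases Nat.eq_zero_or_pos r with hr0 | hrpos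
    · subst hr0
      rw [bermanC_succ, if_pos rfl]
      have hA0 : ∀ i : Fin (m+1) → Fin n, Amat n (m+1) i (fun _ => 0) = 1 :=
        fun i => if_pos (fun k => Or.inl ((fin_val_zero _).2 rfl))
      constructor
      · rintro ⟨c, hc⟩ i hi
        -- v = chkC of e where e is c at the zero index
        set e : (Fin (m+1) → Fin n) → ZMod 2 :=
          fun j => if j = (fun _ => 0) then c else 0 with he
        have hve : chkC n (m+1) e = v := by
          funext i0
          rw [chkC, Finset.sum_eq_single_of_mem (fun _ => 0) (Finset.mem_univ _)
            (fun j _ hj => by rw [he]; simp only [if_neg hj, mul_zero])]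
          rw [hA0 i0, one_mul]
          simp [he, hc]
        have : chkC n (m+1) v = e := by rw [← hve, chkC_chkC]
        rw [this]
        have hne : i ≠ (fun _ => 0) := by
          intro hj
          rw [← wtTuple_zero_iff i] at hj
          omega
        simp [he, hne]
      · intro h
        refine ⟨chkC n (m+1) v (fun _ => 0), fun i => ?_⟩
        have hvv := chkC_chkC (n := n) (m+1) v
        conv_lhs => rw [← hvv]
        rw [chkC, Finset.sum_eq_single_of_mem (fun _ => 0) (Finset.mem_univ _)
          (fun j _ hj => by
            rw [h j (by have := (wtTuple_zero_iff j).not.2 hj; omega), mul_zero])]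
        rw [hA0 i, one_mul]
    · rcases le_or_gt r m with hrm | hrm
      · obtain ⟨s, rfl⟩ : ∃ s, r = s + 1 := ⟨r - 1, by omega⟩
        rw [bermanC_succ, if_neg (by omega), if_neg (by omega)]
        simp only [Nat.add_sub_cancel]
        have h0val : ((0 : Fin n) : ℕ) = 0 := (fin_val_zero _).2 rfl
        constructor
        · rintro ⟨u, w, hu, hw, hwz, hsv⟩ i hi
          obtain ⟨i', a, rfl⟩ : ∃ i' a, i = Fin.snoc i' a :=
            ⟨Fin.init i, i (Fin.last m), (Fin.snoc_init_self i).symm⟩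
          rw [wtTuple_snoc] at hi
          rw [chkC_snoc]
          have hu' := (ih (s+1) u).1 hu
          have hw0 := (ih s (w 0)).1 (hw 0 (by rw [(fin_val_zero (0 : Fin n)).2 rfl]; omega))
          by_cases ha : (a : ℕ) = 0
          · rw [if_pos ha]
            rw [if_pos ha] at hi
            rw [hsv 0, chkC_add, hu' i' (by omega), hw0 i' (by omega), add_zero]
          · rw [if_neg ha]
            rw [if_neg ha] at hi
            rw [hsv 0, hsv a, chkC_add, chkC_add]
            have hw0' : chkC n m (w 0) i' = 0 := hw0 i' (by omega)
            have hwa : chkC n m (w a) i' = 0 := by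
              by_cases han : (a : ℕ) = n - 1
              · rw [hwz a han]; exact chkC_zero m i'
              · have := (ih s (w a)).1 (hw a (by have := a.isLt; omega))
                exact this i' (by omega)
            have key : ∀ x y w : ZMod 2, y = 0 → w = 0 → (x + y) + (x + w) = 0 := by decide
            exact key _ _ _ hw0' hwa
        · intro h
          set z : Fin n := ⟨n-1, by omega⟩ with hzdef
          have hzne : (z : ℕ) ≠ 0 := by simp [hzdef]; omega
          have hchk0 : ∀ i', s+2 ≤ wtTuple i' → chkC n m (subvec v 0) i' = 0 := by
            intro i' hi'
            have h0 := h (Fin.snoc i' 0)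
              (by rw [wtTuple_snoc, if_pos h0val]; omega)
            rwa [chkC_snoc, if_pos h0val] at h0
          have hchkp : ∀ b : Fin n, (b : ℕ) ≠ 0 → ∀ i', s+1 ≤ wtTuple i' →
              chkC n m (subvec v 0) i' + chkC n m (subvec v b) i' = 0 := by
            intro b hb i' hi'
            have h0 := h (Fin.snoc i' b) (by rw [wtTuple_snoc, if_neg hb]; omega)
            rwa [chkC_snoc, if_neg hb] at h0
          refine ⟨subvec v z, fun l => subvec v l + subvec v z, ?_, ?_, ?_, ?_⟩
          · apply (ih (s+1) _).2
            intro i' hi'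
            have h1 := hchk0 i' (by omega)
            have h2 := hchkp z hzne i' (by omega)
            have key : ∀ x w : ZMod 2, x = 0 → x + w = 0 → w = 0 := by decide
            exact key _ _ h1 h2
          · intro l hl
            apply (ih s _).2
            intro i' hi'
            rw [chkC_add]
            have h2 := hchkp z hzne i' hi'
            by_cases hl0 : (l : ℕ) = 0
            · have hl0' : l = 0 := (fin_val_zero l).1 hl0
              subst hl0'
              exact h2
            · have h1 := hchkp l hl0 i' hi'
              have key : ∀ x y w : ZMod 2, x + y = 0 → x + w = 0 → y + w = 0 := by decide
              exact key _ _ _ h1 h2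
          · intro l hl
            have : l = z := Fin.ext (by rw [hl])
            subst this
            funext x
            exact CharTwo.add_self_eq_zero _
          · intro l
            funext x
            have key : ∀ p q : ZMod 2, p = q + (p + q) := by decide
            exact key _ _
      · rw [bermanC_succ, if_neg (by omega), if_pos (by omega)]
        simp only [Set.mem_univ, true_iff]
        intro i hi
        exact absurd hi (by have := wtTuple_le i; omega)

end MemC

section Final

variable {n : ℕ}

lemma chkD_smul (m : ℕ) (c : ZMod 2) (v : (Fin m → Fin n) → ZMod 2) (i : Fin m → Fin n) :
    chkD n m (c • v) i = c * chkD n m v i := by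
  simp only [chkD, Pi.smul_apply, smul_eq_mul, Finset.mul_sum, mul_assoc]

lemma chkC_smul (m : ℕ) (c : ZMod 2) (v : (Fin m → Fin n) → ZMod 2) (i : Fin m → Fin n) :
    chkC n m (c • v) i = c * chkC n m v i := by
  simp only [chkC, Pi.smul_apply, smul_eq_mul, Finset.mul_sum]
  exact Finset.sum_congr rfl fun j _ => by ring

lemma chkD_zero' (m : ℕ) (i : Fin m → Fin n) : chkD n m 0 i = 0 := by simp [chkD]

end Final


/-- the rows of `A_m` indexed by tuples of weight `≥ r+1` form a basis of
`D_n(r,m)`, and the columns of `A_m` indexed by tuples of weight `≤ r` form a basis of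
`C_n(r,m)`. -/
theorem berman_basis_Amat (n m r : ℕ) (hn : 2 ≤ n) (hm : 1 ≤ m) (hr : r ≤ m) :
    (LinearIndependent (ZMod 2)
        (fun i : {i : Fin m → Fin n // r + 1 ≤ wtTuple i} => Amat n m i.1) ∧
      (↑(Submodule.span (ZMod 2)
          ((fun i => Amat n m i) '' {i : Fin m → Fin n | r + 1 ≤ wtTuple i})) :
        Set ((Fin m → Fin n) → ZMod 2)) = BermanD n m r) ∧
    (LinearIndependent (ZMod 2)
        (fun j : {j : Fin m → Fin n // wtTuple j ≤ r} => fun i => Amat n m i j.1) ∧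
      (↑(Submodule.span (ZMod 2)
          ((fun j => fun i => Amat n m i j) '' {j : Fin m → Fin n | wtTuple j ≤ r})) :
        Set ((Fin m → Fin n) → ZMod 2)) = BermanC n m r) := by
  haveI : NeZero n := ⟨by omega⟩
  have hmul := Amat_mul_self (n := n) m
  have hUnit : IsUnit (Amat n m) := ⟨⟨Amat n m, Amat n m, hmul, hmul⟩, rfl⟩
  refine ⟨⟨?_, ?_⟩, ⟨?_, ?_⟩⟩
  · exact (Matrix.linearIndependent_rows_iff_isUnit.2 hUnit).comp _ Subtype.coe_injective
  · -- span of rows = BermanD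
    apply Set.Subset.antisymm
    · intro v hv
      rw [SetLike.mem_coe] at hv
      rw [memD_iff hn m r v]
      have : ∀ i, wtTuple i ≤ r → chkD n m v i = 0 := by
        intro i hi
        induction hv using Submodule.span_induction with
        | mem x hx =>
          obtain ⟨i0, hi0, rfl⟩ := hx
          have hne : i0 ≠ i := fun he => by
            rw [Set.mem_setOf_eq] at hi0; subst he; omega
          have hch : chkD n m (Amat n m i0) i = (Amat n m * Amat n m) i0 i := by
            rw [Matrix.mul_apply]; rfl
          rw [hch, hmul, Matrix.one_apply_ne hne]
        | zero => exact chkD_zero' m i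
        | add x y _ _ hx hy => rw [chkD_add, hx, hy, add_zero]
        | smul c x _ hx => rw [chkD_smul, hx, mul_zero]
      exact this
    · intro v hv
      rw [memD_iff hn m r v] at hv
      rw [SetLike.mem_coe]
      have hrep : v = ∑ i : Fin m → Fin n, chkD n m v i • Amat n m i := by
        funext j
        rw [Finset.sum_apply]
        have h1 : ∑ i, (chkD n m v i • Amat n m i) j = ∑ i, chkD n m v i * Amat n m i j :=
          Finset.sum_congr rfl fun i _ => by rw [Pi.smul_apply, smul_eq_mul]
        rw [h1]
        have h2 : ∑ i, chkD n m v i * Amat n m i j = chkD n m (chkD n m v) j := rfl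
        rw [h2, chkD_chkD]
      rw [hrep]
      apply Submodule.sum_mem
      intro i _
      by_cases hi : r + 1 ≤ wtTuple i
      · exact Submodule.smul_mem _ _ (Submodule.subset_span ⟨i, hi, rfl⟩)
      · rw [hv i (by omega), zero_smul]
        exact Submodule.zero_mem _
  · have := (Matrix.linearIndependent_cols_iff_isUnit.2 hUnit).comp
      (fun j : {j : Fin m → Fin n // wtTuple j ≤ r} => j.1) Subtype.coe_injective
    exact this
  · apply Set.Subset.antisymm
    · intro v hv
      rw [SetLike.mem_coe] at hv
      rw [memC_iff hn m r v]
      have : ∀ i, r + 1 ≤ wtTuple i → chkC n m v i = 0 := by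
        intro i hi
        induction hv using Submodule.span_induction with
        | mem x hx =>
          obtain ⟨j0, hj0, rfl⟩ := hx
          have hne : i ≠ j0 := fun he => by
            rw [Set.mem_setOf_eq] at hj0; subst he; omega
          have hch : chkC n m (fun i' => Amat n m i' j0) i = (Amat n m * Amat n m) i j0 := by
            rw [Matrix.mul_apply]; rfl
          rw [hch, hmul, Matrix.one_apply_ne hne]
        | zero => exact chkC_zero m i
        | add x y _ _ hx hy => rw [chkC_add, hx, hy, add_zero]
        | smul c x _ hx => rw [chkC_smul, hx, mul_zero]
      exact this
    · intro v hv
      rw [memC_iff hn m r v] at hv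
      rw [SetLike.mem_coe]
      have hrep : v = ∑ j : Fin m → Fin n, chkC n m v j • (fun i => Amat n m i j) := by
        funext i
        rw [Finset.sum_apply]
        have h1 : ∑ j, (chkC n m v j • fun i' => Amat n m i' j) i =
            ∑ j, Amat n m i j * chkC n m v j :=
          Finset.sum_congr rfl fun j _ => by rw [Pi.smul_apply, smul_eq_mul, mul_comm]
        rw [h1]
        have h2 : ∑ j, Amat n m i j * chkC n m v j = chkC n m (chkC n m v) i := rfl
        rw [h2, chkC_chkC]
      rw [hrep]
      apply Submodule.sum_mem
      intro j _
      by_cases hj : wtTuple j ≤ r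
      · exact Submodule.smul_mem _ _ (Submodule.subset_span ⟨j, hj, rfl⟩)
      · rw [hv j (by omega), zero_smul]
        exact Submodule.zero_mem _
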